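/- Let μ be a probability distribution over {−1,+1}^n and α ∈ (0,1). Then the following are equivalent: (a) for all z ∈ ℝ_{>0}^n, g_μ(z₁^α,…,z_n^α)^{1/α} ≤ ∏_{i=1}^n (μ_i(+1)z_i + μ_i(−1)); (b) the homogenization μ^hom over n-subsets of [n] ∪ [n̄] satisfies: for all w ∈ ℝ_{>0}^{2n}, g_{μ^hom}(w₁^α,…,w_{2n}^α)^{1/(nα)} ≤ (1/n)·∑_{i∈[n]∪[n̄]} Pr_{S∼μ^hom}[i ∈ S]·w_i. -/

import Mathlib

open Finset

/-- Marginal probability `μ_i(b)` (with `true` encoding spin `+1`). -/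
noncomputable def margProb {n : ℕ} (μ : (Fin n → Bool) → ℝ) (i : Fin n) (b : Bool) : ℝ :=
  ∑ σ : Fin n → Bool, if σ i = b then μ σ else 0

/-- Generating function `g_μ(z) = ∑_σ μ(σ) ∏_{i : σ_i = +1} z_i`. -/
noncomputable def genFun {n : ℕ} (μ : (Fin n → Bool) → ℝ) (z : Fin n → ℝ) : ℝ :=
  ∑ σ : Fin n → Bool, μ σ * ∏ i : Fin n, if σ i then z i else 1

/-- Generating function of the homogenization `μ^hom` over `n`-subsets of
`[n] ⊕ [n̄]`: each configuration `σ` contributes the monomial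
`∏_{i : σ_i = +1} w(inl i) · ∏_{i : σ_i = −1} w(inr i)`. -/
noncomputable def genFunHom {n : ℕ} (μ : (Fin n → Bool) → ℝ)
    (w : (Fin n ⊕ Fin n) → ℝ) : ℝ :=
  ∑ σ : Fin n → Bool, μ σ * ∏ i : Fin n,
    if σ i then w (Sum.inl i) else w (Sum.inr i)

/-- `Pr_{S∼μ^hom}[j ∈ S]`: equals `μ_i(+1)` for `j = inl i` and `μ_i(−1)` for `j = inr i`. -/
noncomputable def homMarg {n : ℕ} (μ : (Fin n → Bool) → ℝ) (j : Fin n ⊕ Fin n) : ℝ :=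
  Sum.elim (fun i => margProb μ i true) (fun i => margProb μ i false) j

/-- Factorization of the homogenized generating function. -/
lemma genFunHom_factor {n : ℕ} (μ : (Fin n → Bool) → ℝ) (W : (Fin n ⊕ Fin n) → ℝ)
    (hW : ∀ i, W (Sum.inr i) ≠ 0) :
    genFunHom μ W = (∏ i : Fin n, W (Sum.inr i)) *
      genFun μ (fun i => W (Sum.inl i) / W (Sum.inr i)) := by
  unfold genFunHom genFun
  rw [Finset.mul_sum]
  refine Finset.sum_congr rfl fun σ _ => ?_
  rw [← mul_assoc, mul_comm _ (μ σ), mul_assoc, ← Finset.prod_mul_distrib]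
  congr 1
  refine Finset.prod_congr rfl fun i _ => ?_
  by_cases h : σ i <;> simp [h, mul_div_cancel₀, hW i, mul_comm]

lemma genFun_nonneg {n : ℕ} (μ : (Fin n → Bool) → ℝ) (hμ0 : ∀ σ, 0 ≤ μ σ)
    (z : Fin n → ℝ) (hz : ∀ i, 0 ≤ z i) : 0 ≤ genFun μ z := by
  refine Finset.sum_nonneg fun σ _ => mul_nonneg (hμ0 σ) (Finset.prod_nonneg fun i _ => ?_)
  by_cases h : σ i <;> simp [h, hz i]

lemma margProb_nonneg {n : ℕ} (μ : (Fin n → Bool) → ℝ) (hμ0 : ∀ σ, 0 ≤ μ σ)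
    (i : Fin n) (b : Bool) : 0 ≤ margProb μ i b := by
  refine Finset.sum_nonneg fun σ _ => ?_
  split <;> simp [hμ0 σ]

lemma margProb_add {n : ℕ} (μ : (Fin n → Bool) → ℝ)
    (hμ1 : ∑ σ : Fin n → Bool, μ σ = 1) (i : Fin n) :
    margProb μ i true + margProb μ i false = 1 := by
  unfold margProb
  rw [← Finset.sum_add_distrib, ← hμ1]
  refine Finset.sum_congr rfl fun σ _ => ?_
  by_cases h : σ i <;> simp [h]

lemma amgm {n : ℕ} (hn : 0 < n) (a : Fin n → ℝ) (ha : ∀ i, 0 ≤ a i) :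
    (∏ i, a i) ^ ((1 : ℝ) / n) ≤ (1 / n) * ∑ i, a i := by
  have hn' : (0 : ℝ) < n := Nat.cast_pos.mpr hn
  have h := Real.geom_mean_le_arith_mean_weighted Finset.univ (fun _ => (1 : ℝ) / n) a
    (fun _ _ => by positivity)
    (by simp [Finset.sum_const, mul_one_div]; field_simp)
    (fun i _ => ha i)
  rw [Real.finset_prod_rpow _ _ (fun i _ => ha i)] at h
  calc (∏ i, a i) ^ ((1 : ℝ) / n) ≤ ∑ i, (1 / n : ℝ) * a i := h
    _ = (1 / n) * ∑ i, a i := by rw [Finset.mul_sum]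

theorem product_domination_iff_entropic_independence {n : ℕ} (hn : 0 < n) (α : ℝ)
    (hα : α ∈ Set.Ioo (0 : ℝ) 1) (μ : (Fin n → Bool) → ℝ)
    (hμ0 : ∀ σ, 0 ≤ μ σ) (hμ1 : ∑ σ : Fin n → Bool, μ σ = 1) :
    (∀ z : Fin n → ℝ, (∀ i, 0 < z i) →
        (genFun μ fun i => z i ^ α) ^ ((1 : ℝ) / α)
          ≤ ∏ i : Fin n, (margProb μ i true * z i + margProb μ i false)) ↔
    (∀ w : (Fin n ⊕ Fin n) → ℝ, (∀ j, 0 < w j) →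
        (genFunHom μ fun j => w j ^ α) ^ ((1 : ℝ) / (n * α))
          ≤ (1 / n) * ∑ j : Fin n ⊕ Fin n, homMarg μ j * w j) := by
  obtain ⟨hα0, hα1⟩ := hα
  have hn' : (0 : ℝ) < n := Nat.cast_pos.mpr hn
  have hp : ∀ i, 0 ≤ margProb μ i true := fun i => margProb_nonneg μ hμ0 i true
  have hq : ∀ i, 0 ≤ margProb μ i false := fun i => margProb_nonneg μ hμ0 i false
  have hpq : ∀ i, margProb μ i true + margProb μ i false = 1 := margProb_add μ hμ1
  -- exponent arithmetic
  have hexp : (1 : ℝ) / (n * α) = (1 / α) * (1 / n) := by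
    rw [div_mul_div_comm, one_mul, mul_comm]
  constructor
  · -- (a) → (b)
    intro h w hw
    set z : Fin n → ℝ := fun i => w (Sum.inl i) / w (Sum.inr i) with hz_def
    have hz : ∀ i, 0 < z i := fun i => div_pos (hw _) (hw _)
    have hfact : (genFunHom μ fun j => w j ^ α)
        = (∏ i : Fin n, w (Sum.inr i) ^ α) * genFun μ (fun i => z i ^ α) := by
      rw [genFunHom_factor μ (fun j => w j ^ α)
        (fun i => (Real.rpow_pos_of_pos (hw _) α).ne')]
      have : (fun i => w (Sum.inl i) ^ α / w (Sum.inr i) ^ α) = fun i => z i ^ α := by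
        funext i
        rw [← Real.div_rpow (hw _).le (hw _).le]
      rw [this]
    have hG : 0 ≤ genFun μ (fun i => z i ^ α) :=
      genFun_nonneg μ hμ0 _ (fun i => (Real.rpow_pos_of_pos (hz i) α).le)
    have hR : (0 : ℝ) < ∏ i : Fin n, w (Sum.inr i) :=
      Finset.prod_pos fun i _ => hw _
    have hRpow : (∏ i : Fin n, w (Sum.inr i) ^ α) = (∏ i : Fin n, w (Sum.inr i)) ^ α :=
      Real.finset_prod_rpow _ _ (fun i _ => (hw _).le) α
    set G := genFun μ (fun i => z i ^ α) with hGdef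
    set R := ∏ i : Fin n, w (Sum.inr i) with hRdef
    have key : (genFunHom μ fun j => w j ^ α) ^ ((1 : ℝ) / (n * α))
        = R ^ ((1 : ℝ) / n) * (G ^ ((1 : ℝ) / α)) ^ ((1 : ℝ) / n) := by
      rw [hfact, hRpow, Real.mul_rpow (Real.rpow_nonneg hR.le α) hG,
        ← Real.rpow_mul hR.le, ← Real.rpow_mul hG]
      have e1 : α * ((1 : ℝ) / (↑n * α)) = 1 / ↑n := by
        field_simp
      rw [e1, ← hexp]
    rw [key]
    have hP : ∀ i, 0 ≤ margProb μ i true * z i + margProb μ i false := fun i =>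
      add_nonneg (mul_nonneg (hp i) (hz i).le) (hq i)
    have h1 : (G ^ ((1 : ℝ) / α)) ^ ((1 : ℝ) / n)
        ≤ (∏ i : Fin n, (margProb μ i true * z i + margProb μ i false)) ^ ((1 : ℝ) / n) :=
      Real.rpow_le_rpow (Real.rpow_nonneg hG _) (h z hz) (by positivity)
    have h2 : R ^ ((1 : ℝ) / n) * (G ^ ((1 : ℝ) / α)) ^ ((1 : ℝ) / n)
        ≤ (∏ i : Fin n, (margProb μ i true * w (Sum.inl i)
            + margProb μ i false * w (Sum.inr i))) ^ ((1 : ℝ) / n) := by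
      have : R ^ ((1 : ℝ) / n) * (G ^ ((1 : ℝ) / α)) ^ ((1 : ℝ) / n)
          ≤ R ^ ((1 : ℝ) / n) *
            (∏ i : Fin n, (margProb μ i true * z i + margProb μ i false)) ^ ((1 : ℝ) / n) :=
        mul_le_mul_of_nonneg_left h1 (Real.rpow_nonneg hR.le _)
      refine this.trans (le_of_eq ?_)
      rw [← Real.mul_rpow hR.le (Finset.prod_nonneg fun i _ => hP i), hRdef,
        ← Finset.prod_mul_distrib]
      congr 1
      refine Finset.prod_congr rfl fun i _ => ?_
      have hwr : w (Sum.inr i) ≠ 0 := (hw _).ne'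
      field_simp [hz_def]
      have hwz : w (Sum.inr i) * z i = w (Sum.inl i) := by rw [hz_def]; field_simp
      linear_combination margProb μ i true * hwz
    refine (h2.trans ?_)
    have := amgm hn (fun i => margProb μ i true * w (Sum.inl i)
      + margProb μ i false * w (Sum.inr i)) (fun i =>
        add_nonneg (mul_nonneg (hp i) (hw _).le) (mul_nonneg (hq i) (hw _).le))
    refine this.trans (le_of_eq ?_)
    congr 1
    rw [Fintype.sum_sum_type, ← Finset.sum_add_distrib]
    simp [homMarg]
  · -- (b) → (a)
    intro h z hz
    set P : Fin n → ℝ := fun i => margProb μ i true * z i + margProb μ i false with hPdef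
    have hPpos : ∀ i, 0 < P i := by
      intro i
      rcases (hq i).eq_or_lt with hq0 | hq0
      · have : margProb μ i true = 1 := by have := hpq i; linarith
        simp only [hPdef, this, one_mul, ← hq0]
        linarith [hz i]
      · have : 0 ≤ margProb μ i true * z i := mul_nonneg (hp i) (hz i).le
        simp only [hPdef]; linarith
    set w : (Fin n ⊕ Fin n) → ℝ :=
      Sum.elim (fun i => z i / P i) (fun i => 1 / P i) with hwdef
    have hw : ∀ j, 0 < w j := by
      rintro (i | i) <;> simp only [hwdef, Sum.elim_inl, Sum.elim_inr] <;>
        exact div_pos (by first | exact hz i | norm_num) (hPpos i)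
    have hb := h w hw
    -- the RHS equals 1
    have hsum : (1 / (n : ℝ)) * ∑ j : Fin n ⊕ Fin n, homMarg μ j * w j = 1 := by
      rw [Fintype.sum_sum_type, ← Finset.sum_add_distrib]
      have : ∀ i : Fin n, homMarg μ (Sum.inl i) * w (Sum.inl i)
          + homMarg μ (Sum.inr i) * w (Sum.inr i) = 1 := by
        intro i
        simp only [homMarg, Sum.elim_inl, Sum.elim_inr, hwdef]
        have hPne : P i ≠ 0 := (hPpos i).ne'
        field_simp
        rw [hPdef]
      rw [Finset.sum_congr rfl fun i _ => this i]
      simp only [Finset.sum_const, Finset.card_univ, Fintype.card_fin, nsmul_eq_mul, mul_one]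
      rw [one_div, inv_mul_cancel₀ hn'.ne']

    rw [hsum] at hb
    -- factor the generating function
    set G := genFun μ (fun i => z i ^ α) with hGdef
    have hG : 0 ≤ G :=
      genFun_nonneg μ hμ0 _ (fun i => (Real.rpow_pos_of_pos (hz i) α).le)
    set Q := ∏ i : Fin n, P i with hQdef
    have hQ : 0 < Q := Finset.prod_pos fun i _ => hPpos i
    have hfact : (genFunHom μ fun j => w j ^ α) = (Q ^ α)⁻¹ * G := by
      rw [genFunHom_factor μ (fun j => w j ^ α)
        (fun i => (Real.rpow_pos_of_pos (hw _) α).ne')]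
      congr 1
      · rw [Real.finset_prod_rpow _ _ (fun i _ => (hw _).le) α]
        rw [← Real.inv_rpow hQ.le]
        congr 1
        rw [hQdef, ← Finset.prod_inv_distrib]
        refine Finset.prod_congr rfl fun i _ => ?_
        simp [hwdef, one_div]
      · rw [hGdef]
        congr 1
        funext i
        rw [← Real.div_rpow (hw (Sum.inl i)).le (hw (Sum.inr i)).le]
        congr 1
        simp only [hwdef, Sum.elim_inl, Sum.elim_inr]
        have hPne : P i ≠ 0 := (hPpos i).ne'
        field_simp
    rw [hfact] at hb
    -- from A ^ c ≤ 1 with c > 0 conclude A ≤ 1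
    have hA : 0 ≤ (Q ^ α)⁻¹ * G :=
      mul_nonneg (inv_nonneg.mpr (Real.rpow_nonneg hQ.le α)) hG
    have hc : (0 : ℝ) < 1 / (n * α) := by positivity
    have hle1 : (Q ^ α)⁻¹ * G ≤ 1 := by
      have := Real.rpow_le_rpow (Real.rpow_nonneg hA _) hb (le_of_lt (by positivity :
        (0 : ℝ) < n * α))
      rwa [← Real.rpow_mul hA, one_div, inv_mul_cancel₀ (by positivity : (n : ℝ) * α ≠ 0),
        Real.rpow_one, Real.one_rpow] at this
    have hGQ : G ≤ Q ^ α := by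
      have hQα : 0 < Q ^ α := Real.rpow_pos_of_pos hQ α
      calc G = Q ^ α * ((Q ^ α)⁻¹ * G) := by field_simp
        _ ≤ Q ^ α * 1 := mul_le_mul_of_nonneg_left hle1 hQα.le
        _ = Q ^ α := mul_one _
    have := Real.rpow_le_rpow hG hGQ (by positivity : (0 : ℝ) ≤ 1 / α)
    rwa [← Real.rpow_mul hQ.le, mul_one_div, div_self hα0.ne', Real.rpow_one] at this
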